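/- Let a < b be real numbers, let F : ℝ → ℂ be continuously differentiable on the interval I = [a, b], let 0 < λ ≤ b − a, and let p, p' ∈ (1, ∞) satisfy 1/p + 1/p' = 1. Then sup_{t ∈ I} |F(t)| ≤ λ^{−1/p} (∫_I |F(t)|^p dt)^{1/p} + λ^{1/p'} (∫_I |F'(t)|^p dt)^{1/p}. -/

import Mathlib

open MeasureTheory Set

lemma holder_aux' {c d p p' : ℝ} (hcd : c < d) (hpq : Real.HolderConjugate p p')
    {h : ℝ → ℝ} (hcont : ContinuousOn h (Icc c d)) (hnn : ∀ x, 0 ≤ h x) :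
    ∫ x in c..d, h x ≤ (d - c) ^ (1 / p') * (∫ x in c..d, h x ^ p) ^ (1 / p) := by
  have hfin : IsFiniteMeasure (volume.restrict (Ioc c d)) := by
    constructor
    rw [Measure.restrict_apply_univ, Real.volume_Ioc]
    exact ENNReal.ofReal_lt_top
  have hmeas : AEStronglyMeasurable h (volume.restrict (Ioc c d)) :=
    (hcont.mono Ioc_subset_Icc_self).aestronglyMeasurable measurableSet_Ioc
  obtain ⟨M, hM⟩ := isCompact_Icc.exists_bound_of_continuousOn hcont
  have hbd : ∀ᵐ x ∂(volume.restrict (Ioc c d)), ‖h x‖ ≤ M := by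
    filter_upwards [ae_restrict_mem measurableSet_Ioc] with x hx
    exact hM x (Ioc_subset_Icc_self hx)
  have hmem : MemLp h (ENNReal.ofReal p) (volume.restrict (Ioc c d)) :=
    MemLp.of_bound hmeas M hbd
  have hmem1 : MemLp (fun _ : ℝ => (1 : ℝ)) (ENNReal.ofReal p') (volume.restrict (Ioc c d)) :=
    memLp_const 1
  have H := integral_mul_le_Lp_mul_Lq_of_nonneg hpq (μ := volume.restrict (Ioc c d))
    (ae_of_all _ hnn) (ae_of_all _ fun _ => zero_le_one) hmem hmem1
  simp only [mul_one, Real.one_rpow] at H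
  rw [intervalIntegral.integral_of_le hcd.le, intervalIntegral.integral_of_le hcd.le]
  calc ∫ x in Ioc c d, h x
      ≤ (∫ x in Ioc c d, h x ^ p) ^ (1 / p) * (∫ _ in Ioc c d, (1:ℝ)) ^ (1 / p') := H
    _ = (d - c) ^ (1 / p') * (∫ x in Ioc c d, h x ^ p) ^ (1 / p) := by
        rw [setIntegral_const, Real.volume_real_Ioc_of_le hcd.le, smul_eq_mul, mul_one]
        ring

lemma mono_aux' {a b c d : ℝ} (h1 : a ≤ c) (h2 : c ≤ d) (h3 : d ≤ b) {f : ℝ → ℝ}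
    (hf : IntegrableOn f (Icc a b)) (hnn : ∀ x, 0 ≤ f x) :
    ∫ x in c..d, f x ≤ ∫ x in a..b, f x := by
  rw [intervalIntegral.integral_of_le h2,
    intervalIntegral.integral_of_le (h1.trans (h2.trans h3))]
  exact setIntegral_mono_set (hf.mono_set Ioc_subset_Icc_self) (ae_of_all _ hnn)
    (HasSubset.Subset.eventuallyLE (Ioc_subset_Ioc h1 h3))

/-- Lemma 2.5: for `F` continuously differentiable on `I = [a,b]`,
`0 < λ ≤ b - a` and conjugate exponents `p, p' ∈ (1,∞)`,
`sup_I |F| ≤ λ^{-1/p} (∫_I |F|^p)^{1/p} + λ^{1/p'} (∫_I |F'|^p)^{1/p}`. -/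
theorem oscillating_dunkl_lemma_2_5
    (a b : ℝ) (hab : a < b) (F : ℝ → ℂ)
    (hF : ContDiffOn ℝ 1 F (Icc a b))
    (lam p p' : ℝ) (hlam_pos : 0 < lam) (hlam_le : lam ≤ b - a)
    (hp : 1 < p) (hp' : 1 < p') (hpp' : 1 / p + 1 / p' = 1) :
    ∀ t ∈ Icc a b,
      ‖F t‖ ≤ lam ^ (-(1 / p)) * (∫ t in a..b, ‖F t‖ ^ p) ^ (1 / p)
        + lam ^ (1 / p') * (∫ t in a..b, ‖deriv F t‖ ^ p) ^ (1 / p) := by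
  intro t ht
  obtain ⟨hta, htb⟩ := ht
  have hpos : 0 < p := lt_trans one_pos hp
  have hpq : p.HolderConjugate p' := Real.holderConjugate_iff.mpr ⟨hp, by rw [← one_div, ← one_div]; exact hpp'⟩
  -- the subinterval J = [c, d] of length lam containing t
  set c := min t (b - lam) with hc
  set d := c + lam with hd
  have hac : a ≤ c := le_min hta (by linarith)
  have hct : c ≤ t := min_le_left _ _
  have hdb : d ≤ b := by
    have := min_le_right t (b - lam); simp only [hd]; linarith
  have htd : t ≤ d := by
    rcases le_total t (b - lam) with h1 | h1
    · have : c = t := min_eq_left h1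
      simp only [hd, this]; linarith
    · have : c = b - lam := min_eq_right h1
      simp only [hd, this]; linarith
  have hcd : c < d := by simp only [hd]; linarith
  have hJI : Icc c d ⊆ Icc a b := Icc_subset_Icc hac hdb
  -- the derivative within the interval
  set g : ℝ → ℂ := derivWithin F (Icc a b) with hg
  have hFc : ContinuousOn F (Icc a b) := hF.continuousOn
  have hgc : ContinuousOn g (Icc a b) :=
    hF.continuousOn_derivWithin (uniqueDiffOn_Icc hab) le_rfl
  have hg_eq : ∀ x ∈ Ioo a b, g x = deriv F x := fun x hx =>
    derivWithin_of_mem_nhds (Icc_mem_nhds hx.1 hx.2)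
  -- FTC on subintervals of J
  have ftc : ∀ s ∈ Icc c d, ∫ x in s..t, g x = F t - F s := by
    intro s hs
    have huIcc : uIcc s t ⊆ Icc c d := uIcc_subset_Icc hs ⟨hct, htd⟩
    apply intervalIntegral.integral_eq_sub_of_hasDeriv_right
    · exact hFc.mono ((huIcc.trans hJI))
    · intro x hx
      have hx' : x ∈ Ioo a b := by
        have h1 : min s t ∈ Icc c d := huIcc ⟨le_rfl, min_le_max⟩
        have h2 : max s t ∈ Icc c d := huIcc ⟨min_le_max, le_rfl⟩
        constructor
        · exact lt_of_le_of_lt (hac.trans h1.1) hx.1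
        · exact lt_of_lt_of_le hx.2 (h2.2.trans hdb)
      have hdiff : DifferentiableAt ℝ F x :=
        (hF.differentiableOn one_ne_zero).differentiableAt (Icc_mem_nhds hx'.1 hx'.2)
      rw [hg_eq x hx']
      exact hdiff.hasDerivAt.hasDerivWithinAt
    · exact ((hgc.mono (huIcc.trans hJI)).intervalIntegrable)
  -- the key constant
  set K := ∫ x in c..d, ‖g x‖ with hK
  have hgInt : IntegrableOn (fun x => ‖g x‖) (Ioc c d) := by
    have := ((hgc.mono hJI).norm).integrableOn_Icc (μ := volume)
    exact this.mono_set Ioc_subset_Icc_self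
  -- pointwise bound
  have bound : ∀ s ∈ Icc c d, ‖F t‖ ≤ ‖F s‖ + K := by
    intro s hs
    have h1 : ‖F t‖ ≤ ‖F s‖ + ‖F t - F s‖ := by
      have := norm_add_le (F s) (F t - F s)
      simpa using this
    have h2 : ‖F t - F s‖ ≤ K := by
      rw [← ftc s hs]
      refine le_trans (intervalIntegral.norm_integral_le_integral_norm_uIoc) ?_
      rw [hK, intervalIntegral.integral_of_le hcd.le]
      apply setIntegral_mono_set hgInt (ae_of_all _ fun x => norm_nonneg _)
      apply HasSubset.Subset.eventuallyLE
      rw [uIoc_eq_union]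
      apply union_subset <;> apply Ioc_subset_Ioc
      · exact hs.1
      · exact htd
      · exact hct
      · exact hs.2
    linarith
  -- averaging over J
  have hFInt : IntervalIntegrable (fun s => ‖F s‖) volume c d := by
    apply ContinuousOn.intervalIntegrable
    rw [uIcc_of_le hcd.le]
    exact (hFc.mono hJI).norm
  have avg : lam * ‖F t‖ ≤ (∫ s in c..d, ‖F s‖) + lam * K := by
    have h1 : ∫ _ in c..d, ‖F t‖ = lam * ‖F t‖ := by
      rw [intervalIntegral.integral_const, smul_eq_mul]
      congr 1
      simp only [hd]; ring
    have h2 : (∫ s in c..d, (‖F s‖ + K)) = (∫ s in c..d, ‖F s‖) + lam * K := by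
      rw [intervalIntegral.integral_add hFInt (intervalIntegrable_const)]
      congr 1
      rw [intervalIntegral.integral_const, smul_eq_mul]
      congr 1
      simp only [hd]; ring
    have h3 := intervalIntegral.integral_mono_on hcd.le intervalIntegrable_const
      (hFInt.add intervalIntegrable_const) bound
    rw [h1, h2] at h3
    exact h3
  -- Hölder on J for F
  have holderF : ∫ s in c..d, ‖F s‖ ≤ lam ^ (1 / p') * (∫ s in c..d, ‖F s‖ ^ p) ^ (1 / p) := by
    have := holder_aux' hcd hpq ((hFc.mono hJI).norm) (fun x => norm_nonneg _)
    have hdc : d - c = lam := by simp only [hd]; ring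
    rwa [hdc] at this
  have holderG : K ≤ lam ^ (1 / p') * (∫ s in c..d, ‖g s‖ ^ p) ^ (1 / p) := by
    have := holder_aux' hcd hpq ((hgc.mono hJI).norm) (fun x => norm_nonneg _)
    have hdc : d - c = lam := by simp only [hd]; ring
    rwa [hdc] at this
  -- monotonicity of the p-th power integrals
  have hFpInt : IntegrableOn (fun x => ‖F x‖ ^ p) (Icc a b) := by
    apply ContinuousOn.integrableOn_Icc
    exact hFc.norm.rpow_const (fun x _ => Or.inr hpos.le)
  have hgpInt : IntegrableOn (fun x => ‖g x‖ ^ p) (Icc a b) := by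
    apply ContinuousOn.integrableOn_Icc
    exact hgc.norm.rpow_const (fun x _ => Or.inr hpos.le)
  have monoF : ∫ s in c..d, ‖F s‖ ^ p ≤ ∫ s in a..b, ‖F s‖ ^ p :=
    mono_aux' hac hcd.le hdb hFpInt (fun x => Real.rpow_nonneg (norm_nonneg _) _)
  have monoG : ∫ s in c..d, ‖g s‖ ^ p ≤ ∫ s in a..b, ‖g s‖ ^ p :=
    mono_aux' hac hcd.le hdb hgpInt (fun x => Real.rpow_nonneg (norm_nonneg _) _)
  -- replace g by deriv F in the big integral
  have hgderiv : ∫ s in a..b, ‖g s‖ ^ p = ∫ s in a..b, ‖deriv F s‖ ^ p := by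
    apply intervalIntegral.integral_congr_ae
    have hb : ∀ᵐ x : ℝ, x ≠ b := by
      have h0 : (volume : Measure ℝ) {b} = 0 := Real.volume_singleton
      filter_upwards [measure_eq_zero_iff_ae_notMem.1 h0] with x hx
      simpa using hx
    filter_upwards [hb] with x hx hmem
    rw [uIoc_of_le hab.le] at hmem
    have : x ∈ Ioo a b := ⟨hmem.1, lt_of_le_of_ne hmem.2 hx⟩
    rw [hg_eq x this]
  -- assemble
  have hIcd_nonneg : 0 ≤ ∫ s in c..d, ‖F s‖ ^ p :=
    intervalIntegral.integral_nonneg hcd.le (fun x _ => Real.rpow_nonneg (norm_nonneg _) _)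
  have hgcd_nonneg : 0 ≤ ∫ s in c..d, ‖g s‖ ^ p :=
    intervalIntegral.integral_nonneg hcd.le (fun x _ => Real.rpow_nonneg (norm_nonneg _) _)
  have hrF : (∫ s in c..d, ‖F s‖ ^ p) ^ (1 / p) ≤ (∫ s in a..b, ‖F s‖ ^ p) ^ (1 / p) :=
    Real.rpow_le_rpow hIcd_nonneg monoF (by positivity)
  have hrG : (∫ s in c..d, ‖g s‖ ^ p) ^ (1 / p) ≤ (∫ s in a..b, ‖deriv F s‖ ^ p) ^ (1 / p) := by
    rw [← hgderiv]
    exact Real.rpow_le_rpow hgcd_nonneg monoG (by positivity)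
  -- power arithmetic: lam⁻¹ * lam^(1/p') = lam^(-(1/p))
  have hpow : lam⁻¹ * lam ^ (1 / p') = lam ^ (-(1 / p)) := by
    rw [← Real.rpow_neg_one lam, ← Real.rpow_add hlam_pos]
    congr 1
    linarith
  have hlampow_nonneg : (0:ℝ) ≤ lam ^ (1 / p') := Real.rpow_nonneg hlam_pos.le _
  -- final chain
  have step1 : ‖F t‖ ≤ lam⁻¹ * (∫ s in c..d, ‖F s‖) + K := by
    have h := avg
    have hinv : lam⁻¹ * (lam * ‖F t‖) ≤ lam⁻¹ * ((∫ s in c..d, ‖F s‖) + lam * K) :=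
      mul_le_mul_of_nonneg_left h (inv_nonneg.2 hlam_pos.le)
    rw [← mul_assoc, inv_mul_cancel₀ hlam_pos.ne', one_mul, mul_add, ← mul_assoc,
      inv_mul_cancel₀ hlam_pos.ne', one_mul] at hinv
    exact hinv
  calc ‖F t‖ ≤ lam⁻¹ * (∫ s in c..d, ‖F s‖) + K := step1
    _ ≤ lam⁻¹ * (lam ^ (1 / p') * (∫ s in c..d, ‖F s‖ ^ p) ^ (1 / p))
        + lam ^ (1 / p') * (∫ s in c..d, ‖g s‖ ^ p) ^ (1 / p) := by
        exact add_le_add (mul_le_mul_of_nonneg_left holderF (inv_nonneg.2 hlam_pos.le)) holderG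
    _ ≤ lam⁻¹ * (lam ^ (1 / p') * (∫ s in a..b, ‖F s‖ ^ p) ^ (1 / p))
        + lam ^ (1 / p') * (∫ s in a..b, ‖deriv F s‖ ^ p) ^ (1 / p) := by
        gcongr
    _ = lam ^ (-(1 / p)) * (∫ s in a..b, ‖F s‖ ^ p) ^ (1 / p)
        + lam ^ (1 / p') * (∫ s in a..b, ‖deriv F s‖ ^ p) ^ (1 / p) := by
        rw [← mul_assoc, hpow]
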